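/- arXiv:2209.08634 — 7 statements merged into one kernel-verified Lean document; each statement's English description precedes it below -/
import Mathlib

section
/- Let R be a commutative ring in which every odd integer is invertible, and let I be an ideal of R. If (γₙ) and (δₙ) are two divided power structures on I such that γ₂(x) = δ₂(x) for all x ∈ I, then γₙ(x) = δₙ(x) for all n ≥ 0 and all x ∈ I. That is, a divided power structure on an ideal in such a ring is uniquely determined by its second operation γ₂. -/
/-- A divided power structure on an ideal `I` of a commutative ring `R`:
a family of functions `γₙ : I → R` (encoded as `dpow : ℕ → R → R`, constrained on `I`)
satisfying the five axioms of Berthelot–Ogus. -/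
structure DividedPowerStructure (R : Type*) [CommRing R] (I : Ideal R) where
  dpow : ℕ → R → R
  dpow_zero : ∀ x ∈ I, dpow 0 x = 1
  dpow_one : ∀ x ∈ I, dpow 1 x = x
  dpow_mem : ∀ n : ℕ, 0 < n → ∀ x ∈ I, dpow n x ∈ I
  dpow_add : ∀ (n : ℕ), ∀ x ∈ I, ∀ y ∈ I,
    dpow n (x + y) = ∑ i ∈ Finset.range (n + 1), dpow i x * dpow (n - i) y
  dpow_smul : ∀ (n : ℕ) (a : R), ∀ x ∈ I, dpow n (a * x) = a ^ n * dpow n x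
  dpow_mul : ∀ (m n : ℕ), ∀ x ∈ I,
    dpow m x * dpow n x = ((m + n).choose m : R) * dpow (m + n) x
  dpow_comp : ∀ (m n : ℕ), 0 < m → ∀ x ∈ I,
    dpow n (dpow m x) =
      (((m * n).factorial / (m.factorial ^ n * n.factorial) : ℕ) : R) * dpow (m * n) x

lemma aux_odd_doubleFactorial : ∀ k : ℕ, Odd (Nat.doubleFactorial (2 * k + 1))
  | 0 => ⟨0, rfl⟩
  | (k + 1) => by
    have : 2 * (k + 1) + 1 = (2 * k + 1) + 2 := by ring
    rw [this, Nat.doubleFactorial_add_two]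
    exact Odd.mul ⟨k + 1, by ring⟩ (aux_odd_doubleFactorial k)

lemma aux_fact_eq : ∀ m : ℕ, (2 * m).factorial = (2 ^ m * m.factorial) * Nat.doubleFactorial (2 * m - 1)
  | 0 => rfl
  | (m + 1) => by
    have h1 : 2 * (m + 1) = (2 * m + 1) + 1 := by ring
    have h2 : 2 * (m + 1) - 1 = (2 * m - 1) + 2 ∨ m = 0 := by omega
    rcases h2 with h2 | rfl
    · have key : (2 * (m + 1)).factorial = (2 * m + 2) * ((2 * m + 1) * (2 * m).factorial) := by
        rw [show 2 * (m + 1) = 2 * m + 1 + 1 by ring, Nat.factorial_succ, Nat.factorial_succ]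
      have h3 : 2 * m - 1 + 2 = 2 * m + 1 := by omega
      rw [key, aux_fact_eq m, h2, Nat.doubleFactorial_add_two, h3, Nat.factorial_succ, pow_succ]
      ring
    · rfl

lemma aux_coeff (m : ℕ) :
    (2 * m).factorial / (Nat.factorial 2 ^ m * m.factorial) = Nat.doubleFactorial (2 * m - 1) := by
  have h2 : Nat.factorial 2 = 2 := rfl
  rw [h2, aux_fact_eq m]
  exact Nat.mul_div_cancel_left _ (by positivity)

/-- A divided power structure on an ideal of a ring in which every odd integer is
invertible is uniquely determined by its second operation `γ₂`. -/
theorem dividedPowerStructure_ext_of_gamma_two_eq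
    (R : Type*) [CommRing R] (I : Ideal R)
    (hodd : ∀ n : ℤ, Odd n → IsUnit (n : R))
    (γ δ : DividedPowerStructure R I)
    (h2 : ∀ x ∈ I, γ.dpow 2 x = δ.dpow 2 x) :
    ∀ (n : ℕ), ∀ x ∈ I, γ.dpow n x = δ.dpow n x := by
  have hunit : ∀ c : ℕ, Odd c → IsUnit ((c : R)) := by
    intro c hc
    have := hodd (c : ℤ) (by exact_mod_cast hc)
    rwa [Int.cast_natCast] at this
  intro n
  induction n using Nat.strong_induction_on with
  | _ n ih =>
    intro x hx
    match n with
    | 0 => rw [γ.dpow_zero x hx, δ.dpow_zero x hx]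
    | 1 => rw [γ.dpow_one x hx, δ.dpow_one x hx]
    | (n + 2) =>
      rcases Nat.even_or_odd (n + 2) with he | ho
      · obtain ⟨m, hm⟩ := he
        have hm2 : n + 2 = 2 * m := by omega
        have hmlt : m < n + 2 := by omega
        have hγ := γ.dpow_comp 2 m (by norm_num) x hx
        have hδ := δ.dpow_comp 2 m (by norm_num) x hx
        rw [aux_coeff m] at hγ hδ
        have h2mem : γ.dpow 2 x ∈ I := γ.dpow_mem 2 (by norm_num) x hx
        have hih := ih m hmlt (γ.dpow 2 x) h2mem
        rw [h2 x hx] at hih h2mem hγ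
        rw [hih, hδ] at hγ
        have hu : IsUnit ((Nat.doubleFactorial (2 * m - 1) : R)) := by
          apply hunit
          rcases Nat.eq_zero_or_pos m with rfl | hmpos
          · exact ⟨0, rfl⟩
          · have : 2 * m - 1 = 2 * (m - 1) + 1 := by omega
            rw [this]; exact aux_odd_doubleFactorial (m - 1)
        rw [hm2]
        exact (hu.mul_left_cancel hγ).symm
      · have hγ := γ.dpow_mul 1 (n + 1) x hx
        have hδ := δ.dpow_mul 1 (n + 1) x hx
        rw [γ.dpow_one x hx] at hγ
        rw [δ.dpow_one x hx] at hδ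
        rw [ih (n + 1) (by omega) x hx, hδ] at hγ
        have hc : (1 + (n + 1)).choose 1 = n + 2 := by
          rw [Nat.choose_one_right]; omega
        rw [hc] at hγ
        have h12 : 1 + (n + 1) = n + 2 := by omega
        rw [h12] at hγ
        exact ((hunit (n + 2) ho).mul_left_cancel hγ).symm
end

section
/- Define the tangent numbers T(n,i) for natural numbers n, i by the recurrence T(0,0) = 1, T(0,i) = 0 for i > 0, and T(n+1,i) = T(n,i−1) + i·(i+1)·T(n,i+1), where the term T(n,i−1) is omitted when i = 0. Then for every natural number i and every real number t with |t| < π/2, the series Σ_{n≥0} i!·T(n,i)·tⁿ/n! converges and its sum equals (tan t)^i. In other words, (tan t)^i / i! = Σ_{n≥0} T(n,i)·tⁿ/n! on (−π/2, π/2). -/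
/-- The tangent numbers `T(n,i)`, defined by `T(0,0) = 1`, `T(0,i) = 0` for `i > 0`, and
`T(n+1,i) = T(n,i-1) + i·(i+1)·T(n,i+1)`, the first term being omitted when `i = 0`.
They are the coefficients in `(tan t)^i / i! = Σ_{n≥i} T(n,i)·tⁿ/n!`. -/
def tangentNumber : ℕ → ℕ → ℕ
  | 0, i => if i = 0 then 1 else 0
  | n + 1, i => (if i = 0 then 0 else tangentNumber n (i - 1))
      + i * (i + 1) * tangentNumber n (i + 1)

open Metric in

/-- Auxiliary function: `tan z ^ i / i!` over the complexes. -/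
noncomputable def tanPowAux (i : ℕ) : ℂ → ℂ := fun z => Complex.tan z ^ i / (Nat.factorial i : ℂ)

lemma cos_ne_zero_of_norm_lt {z : ℂ} (hz : ‖z‖ < Real.pi / 2) : Complex.cos z ≠ 0 := by
  intro h
  rw [Complex.cos_eq_zero_iff] at h
  obtain ⟨k, hk⟩ := h
  have h1 : z = ((((2 * k + 1 : ℤ) : ℝ) * Real.pi / 2 : ℝ) : ℂ) := by
    rw [hk]; push_cast; ring
  have hpi := Real.pi_pos
  rw [h1, Complex.norm_real, Real.norm_eq_abs, abs_div, abs_mul, abs_of_pos hpi,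
    abs_of_pos (by norm_num : (0:ℝ) < 2)] at hz
  have h2 : (1 : ℝ) ≤ |((2 * k + 1 : ℤ) : ℝ)| := by
    rw [← Int.cast_abs]
    exact_mod_cast Int.one_le_abs (by omega)
  nlinarith

lemma tanPowAux_hasDerivAt (i : ℕ) {z : ℂ} (hz : Complex.cos z ≠ 0) :
    HasDerivAt (tanPowAux i)
      ((if i = 0 then 0 else tanPowAux (i - 1) z) + (i * (i + 1) : ℂ) * tanPowAux (i + 1) z) z := by
  cases i with
  | zero =>
      have h : HasDerivAt (fun _ : ℂ => (1 : ℂ)) 0 z := hasDerivAt_const z 1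
      have he : tanPowAux 0 = fun _ : ℂ => (1 : ℂ) := by
        funext w; simp [tanPowAux]
      rw [he]
      simpa using h
  | succ j =>
      have h1 : HasDerivAt Complex.tan (1 / Complex.cos z ^ 2) z := Complex.hasDerivAt_tan hz
      have h2 : HasDerivAt (fun w => Complex.tan w ^ (j + 1))
          (((j:ℂ) + 1) * Complex.tan z ^ j * (1 / Complex.cos z ^ 2)) z := by
        simpa using h1.fun_pow (j + 1)
      have h3 := h2.div_const ((Nat.factorial (j + 1) : ℂ))
      convert h3 using 1
      · rfl
      · rfl
      · rfl
      have hc : (1 : ℂ) / Complex.cos z ^ 2 = 1 + Complex.tan z ^ 2 := by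
        rw [one_div, ← Complex.inv_one_add_tan_sq hz, inv_inv]
      rw [hc]
      simp only [tanPowAux, if_neg (Nat.succ_ne_zero j), Nat.succ_sub_one]
      have f0 : (Nat.factorial j : ℂ) ≠ 0 := Nat.cast_ne_zero.mpr (Nat.factorial_ne_zero j)
      have hfs1 : (Nat.factorial (j + 1) : ℂ) = ((j:ℂ) + 1) * (Nat.factorial j : ℂ) := by
        rw [Nat.factorial_succ]; push_cast; ring
      have hfs2 : (Nat.factorial (j + 1 + 1) : ℂ)
          = ((j:ℂ) + 2) * (((j:ℂ) + 1) * (Nat.factorial j : ℂ)) := by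
        rw [Nat.factorial_succ, Nat.factorial_succ]; push_cast; ring
      rw [hfs1, hfs2]
      have g1 : ((j:ℂ) + 1) ≠ 0 := by
        intro h; have := congrArg Complex.re h; simp at this; nlinarith [Nat.cast_nonneg (α := ℝ) j]
      have g2 : ((j:ℂ) + 2) ≠ 0 := by
        intro h; have := congrArg Complex.re h; simp at this; nlinarith [Nat.cast_nonneg (α := ℝ) j]
      field_simp
      push_cast
      ring

open Metric in
lemma tanPowAux_contDiffOn (i : ℕ) (n : ℕ) :
    ContDiffOn ℂ n (tanPowAux i) (ball (0:ℂ) (Real.pi / 2)) := by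
  have hd : DifferentiableOn ℂ (tanPowAux i) (ball (0:ℂ) (Real.pi / 2)) := by
    intro z hz
    have hc : Complex.cos z ≠ 0 := cos_ne_zero_of_norm_lt (by simpa using mem_ball_zero_iff.mp hz)
    exact (((Complex.differentiableAt_tan.mpr hc).pow i).div_const _).differentiableWithinAt
  exact hd.contDiffOn isOpen_ball

lemma iteratedDerivWithin_of_isOpen' {s : Set ℂ} (hs : IsOpen s) {x : ℂ} (hx : x ∈ s)
    (f : ℂ → ℂ) (n : ℕ) : iteratedDerivWithin n f s x = iteratedDeriv n f x := by
  rw [iteratedDerivWithin_eq_iteratedFDerivWithin, iteratedFDerivWithin_of_isOpen n hs hx,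
    iteratedDeriv_eq_iteratedFDeriv]

lemma iteratedDeriv_zero_fun (n : ℕ) (x : ℂ) :
    iteratedDeriv n (fun _ : ℂ => (0:ℂ)) x = 0 := by
  induction n generalizing x with
  | zero => simp
  | succ n IH =>
      rw [iteratedDeriv_succ']
      have : deriv (fun _ : ℂ => (0:ℂ)) = fun _ : ℂ => (0:ℂ) := by
        funext w; simp
      rw [this, IH]

open Metric in
lemma iteratedDeriv_tanPowAux (n : ℕ) :
    ∀ i, iteratedDeriv n (tanPowAux i) 0 = (tangentNumber n i : ℂ) := by
  induction n with
  | zero =>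
      intro i
      rcases Nat.eq_zero_or_pos i with rfl | hi
      · simp [tanPowAux, tangentNumber]
      · have hi' : i ≠ 0 := by omega
        simp [tanPowAux, tangentNumber, Complex.tan_zero, zero_pow hi', hi']
  | succ n IH =>
      intro i
      have hpi : (0:ℝ) < Real.pi / 2 := by positivity
      have h0 : (0:ℂ) ∈ ball (0:ℂ) (Real.pi / 2) := mem_ball_self hpi
      have hmem : ball (0:ℂ) (Real.pi / 2) ∈ nhds (0:ℂ) := isOpen_ball.mem_nhds h0
      have hEq : deriv (tanPowAux i) =ᶠ[nhds (0:ℂ)]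
          fun z => (if i = 0 then 0 else tanPowAux (i - 1) z)
            + (i * (i + 1) : ℂ) * tanPowAux (i + 1) z := by
        filter_upwards [hmem] with z hz
        exact (tanPowAux_hasDerivAt i
          (cos_ne_zero_of_norm_lt (by simpa using mem_ball_zero_iff.mp hz))).deriv
      rw [iteratedDeriv_succ', hEq.iteratedDeriv_eq n]
      cases i with
      | zero =>
          have he : (fun z : ℂ => (if (0:ℕ) = 0 then (0:ℂ) else tanPowAux (0 - 1) z)
              + ((0:ℕ) * ((0:ℕ) + 1) : ℂ) * tanPowAux (0 + 1) z) = fun _ : ℂ => (0:ℂ) := by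
            funext w; simp
          rw [he, iteratedDeriv_zero_fun]
          simp [tangentNumber]
      | succ j =>
          set c : ℂ := ((j + 1 : ℕ) * ((j + 1 : ℕ) + 1) : ℂ) with hc
          have huniq : UniqueDiffOn ℂ (ball (0:ℂ) (Real.pi / 2)) := isOpen_ball.uniqueDiffOn
          have hf : ContDiffOn ℂ n (tanPowAux j) (ball (0:ℂ) (Real.pi / 2)) :=
            tanPowAux_contDiffOn j n
          have hg2 : ContDiffOn ℂ n (tanPowAux (j + 2)) (ball (0:ℂ) (Real.pi / 2)) :=
            tanPowAux_contDiffOn (j + 2) n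
          have hg : ContDiffOn ℂ n (fun z => c * tanPowAux (j + 2) z)
              (ball (0:ℂ) (Real.pi / 2)) := contDiffOn_const.mul hg2
          have step1 : iteratedDeriv n
              (fun z : ℂ => (if (j + 1 : ℕ) = 0 then (0:ℂ) else tanPowAux (j + 1 - 1) z)
                + ((j + 1 : ℕ) * ((j + 1 : ℕ) + 1) : ℂ) * tanPowAux (j + 1 + 1) z) 0
              = iteratedDerivWithin n
                (tanPowAux j + fun z => c * tanPowAux (j + 2) z)
                (ball (0:ℂ) (Real.pi / 2)) 0 := by
            rw [iteratedDerivWithin_of_isOpen' isOpen_ball h0]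
            congr 1
          rw [step1, iteratedDerivWithin_add h0 huniq (hf.contDiffWithinAt h0) (hg.contDiffWithinAt h0),
            iteratedDerivWithin_const_mul h0 huniq c (hg2.contDiffWithinAt h0),
            iteratedDerivWithin_of_isOpen' isOpen_ball h0,
            iteratedDerivWithin_of_isOpen' isOpen_ball h0, IH j, IH (j + 2)]
          have : tangentNumber (n + 1) (j + 1)
              = tangentNumber n j + (j + 1) * (j + 2) * tangentNumber n (j + 2) := by
            simp [tangentNumber]
          rw [this, hc]
          push_cast
          all_goals ring

open Real in
/-- For every `i` and `|t| < π/2`, the series `Σₙ i!·T(n,i)·tⁿ/n!` converges, with sum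
`(tan t)^i`; that is, `(tan t)^i / i! = Σ_{n≥0} T(n,i)·tⁿ/n!` on `(-π/2, π/2)`. -/
theorem hasSum_tangentNumber_tan_pow
    (i : ℕ) (t : ℝ) (ht : |t| < Real.pi / 2) :
    HasSum (fun n : ℕ =>
        (Nat.factorial i : ℝ) * (tangentNumber n i : ℝ) * t ^ n / (Nat.factorial n : ℝ))
      (Real.tan t ^ i) := by
  have habs : (0:ℝ) ≤ |t| := abs_nonneg t
  have hpi : (0:ℝ) < Real.pi / 2 := by positivity
  set r : ℝ := (|t| + Real.pi / 2) / 2 with hr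
  have hr0 : 0 < r := by positivity
  have htr : |t| < r := by rw [hr]; linarith
  have hrpi : r < Real.pi / 2 := by rw [hr]; linarith
  set R : NNReal := ⟨r, hr0.le⟩ with hR
  have hd : DifferentiableOn ℂ (tanPowAux i) (Metric.closedBall (0:ℂ) R) := by
    intro z hz
    have hz' : ‖z‖ < Real.pi / 2 := by
      have := Metric.mem_closedBall.mp hz
      rw [dist_zero_right] at this
      exact lt_of_le_of_lt this hrpi
    have hc : Complex.cos z ≠ 0 := cos_ne_zero_of_norm_lt hz'
    exact (((Complex.differentiableAt_tan.mpr hc).pow i).div_const _).differentiableWithinAt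
  have hR0 : 0 < R := by exact_mod_cast hr0
  have hp := hd.hasFPowerSeriesOnBall hR0
  have hy : (t:ℂ) ∈ Metric.eball (0:ℂ) R := by
    rw [mem_emetric_ball_zero_iff]
    have h1 : ‖(t:ℂ)‖₊ < R := by
      rw [← NNReal.coe_lt_coe]
      show ((‖(t:ℂ)‖₊ : NNReal) : ℝ) < r
      simpa using htr
    exact_mod_cast h1
  have hsum := hp.hasSum_iteratedFDeriv hy
  simp only [zero_add] at hsum
  have hterm : ∀ n : ℕ, (Nat.factorial n : ℂ)⁻¹ •
      (iteratedFDeriv ℂ n (tanPowAux i) 0 fun _ => (t:ℂ))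
      = (Nat.factorial n : ℂ)⁻¹ * ((t:ℂ) ^ n * (tangentNumber n i : ℂ)) := by
    intro n
    rw [iteratedFDeriv_apply_eq_iteratedDeriv_mul_prod, iteratedDeriv_tanPowAux n i]
    simp only [Finset.prod_const, Finset.card_univ, Fintype.card_fin, smul_eq_mul]
  have hsum2 : HasSum (fun n : ℕ => (Nat.factorial n : ℂ)⁻¹ * ((t:ℂ) ^ n * (tangentNumber n i : ℂ)))
      (tanPowAux i (t:ℂ)) := by
    simpa only [hterm] using hsum
  have hi : (Nat.factorial i : ℂ) ≠ 0 := Nat.cast_ne_zero.mpr (Nat.factorial_ne_zero i)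
  have hsum3 := hsum2.mul_left ((Nat.factorial i : ℂ))
  have h5 : (Nat.factorial i : ℂ) * tanPowAux i (t:ℂ) = Complex.tan (t:ℂ) ^ i := by
    show (Nat.factorial i : ℂ) * (Complex.tan (t:ℂ) ^ i / (Nat.factorial i : ℂ)) = _
    rw [mul_div_cancel₀ _ hi]
  rw [h5] at hsum3
  have hsum4 : HasSum (fun n : ℕ => (((Nat.factorial i : ℝ) * (tangentNumber n i : ℝ) * t ^ n
      / (Nat.factorial n : ℝ) : ℝ) : ℂ)) ((Real.tan t ^ i : ℝ) : ℂ) := by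
    convert hsum3 using 2 with n
    · rfl
    · push_cast; ring
    · rw [Complex.ofReal_pow, Complex.ofReal_tan]
  exact Complex.hasSum_ofReal.mp hsum4
end

section
/- Let a(n,i) ∈ ℚ, for natural numbers n, i, be the unique solution of the recurrence a(0,0) = 1, a(0,i) = 0 for i > 0, and a(n+1,i) = (i/(n+1))·(a(n,i−1) − a(n,i+1)), where the term a(n,i−1) is omitted when i = 0. Then a(n,i) = 0 when n ≢ i (mod 2), and a(n,i) = (−1)^{(n−i)/2}·(i!/n!)·T(n,i) when n ≡ i (mod 2), where T(n,i) are the tangent numbers. -/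
lemma tangent_eq_zero_of_lt : ∀ n i, n < i → tangentNumber n i = 0 := by
  intro n
  induction n with
  | zero =>
    intro i h
    simp only [tangentNumber]
    rw [if_neg (by omega)]
  | succ n ih =>
    intro i h
    simp only [tangentNumber]
    rw [if_neg (by omega), ih (i - 1) (by omega), ih (i + 1) (by omega)]
    simp

/-- If `a : ℕ → ℕ → ℚ` satisfies `a(0,0) = 1`, `a(0,i) = 0` for `i > 0`, and
`a(n+1,i) = (i/(n+1))·(a(n,i−1) − a(n,i+1))` (first term omitted when `i = 0`), then
`a(n,i) = 0` when `n ≢ i (mod 2)` and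
`a(n,i) = (−1)^{(n−i)/2}·(i!/n!)·T(n,i)` when `n ≡ i (mod 2)`. -/
theorem recurrence_solution_eq_tangentNumber
    (a : ℕ → ℕ → ℚ)
    (h00 : a 0 0 = 1)
    (h0 : ∀ i : ℕ, 0 < i → a 0 i = 0)
    (hrec : ∀ n i : ℕ, a (n + 1) i =
      ((i : ℚ) / ((n : ℚ) + 1)) * ((if i = 0 then 0 else a n (i - 1)) - a n (i + 1))) :
    ∀ n i : ℕ,
      (n % 2 ≠ i % 2 → a n i = 0) ∧
      (n % 2 = i % 2 → a n i =
        (-1) ^ ((n - i) / 2) * ((Nat.factorial i : ℚ) / (Nat.factorial n : ℚ))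
          * (tangentNumber n i : ℚ)) := by
  intro n
  induction n with
  | zero =>
    intro i
    constructor
    · intro h
      exact h0 i (by omega)
    · intro h
      rcases Nat.eq_zero_or_pos i with hi | hi
      · subst hi
        simpa [tangentNumber] using h00
      · rw [h0 i hi]
        have hT : tangentNumber 0 i = 0 := by
          simp only [tangentNumber]; rw [if_neg (by omega)]
        rw [hT]
        simp
  | succ n ih =>
    intro i
    rcases Nat.eq_zero_or_pos i with hi | hi
    · subst hi
      have hz : a (n + 1) 0 = 0 := by
        rw [hrec]; simp
      constructor
      · intro _; exact hz
      · intro hp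
        have hT : tangentNumber (n + 1) 0 = 0 := by
          simp [tangentNumber]
        rw [hz, hT]
        simp
    · obtain ⟨j, rfl⟩ : ∃ j, i = j + 1 := ⟨i - 1, by omega⟩
      constructor
      · intro hp
        have hA := (ih j).1 (by omega)
        have hB := (ih (j + 2)).1 (by omega)
        rw [hrec, if_neg (by omega : j + 1 ≠ 0)]
        simp only [Nat.add_sub_cancel]
        rw [hA, hB]
        ring
      · intro hp
        have hA := (ih j).2 (by omega)
        have hB := (ih (j + 2)).2 (by omega)
        rw [hrec, if_neg (by omega : j + 1 ≠ 0)]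
        simp only [Nat.add_sub_cancel]
        rw [hA, hB]
        have he : (n + 1 - (j + 1)) / 2 = (n - j) / 2 := by omega
        rw [he]
        have hT : (tangentNumber (n + 1) (j + 1) : ℚ)
            = (tangentNumber n j : ℚ)
              + ((j : ℚ) + 1) * ((j : ℚ) + 2) * (tangentNumber n (j + 2) : ℚ) := by
          simp only [tangentNumber]
          rw [if_neg (by omega : j + 1 ≠ 0)]
          simp only [Nat.add_sub_cancel]
          push_cast
          ring
        rw [hT]
        have hn : (Nat.factorial n : ℚ) ≠ 0 := by
          exact_mod_cast Nat.factorial_ne_zero n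
        have hn1 : (n : ℚ) + 1 ≠ 0 := by positivity
        rcases le_or_gt (j + 2) n with hc | hc
        · have hsign : (-1 : ℚ) ^ ((n - (j + 2)) / 2) = -(-1 : ℚ) ^ ((n - j) / 2) := by
            have h2 : (n - (j + 2)) / 2 + 1 = (n - j) / 2 := by omega
            rw [← h2, pow_succ]
            ring
          rw [hsign]
          simp only [Nat.factorial_succ]
          push_cast
          field_simp
          ring
        · have hz : (tangentNumber n (j + 2) : ℚ) = 0 := by
            rw [tangent_eq_zero_of_lt n (j + 2) hc]; simp
          rw [hz]
          simp only [Nat.factorial_succ]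
          push_cast
          field_simp
          ring
end

section
/- Let e, N, l be natural numbers with 2^e dividing N, 0 < l < 2^e, and N ≥ 2l. Then the binomial coefficient C(N − 2l, 2^e − l) is even. (This is the vanishing modulo 2 of the cross terms in the product formula for λ^{2^{i₀}}(x)·λ^m(x) used in the proof that the divided powers reduce to binomial coefficients mod 2.) -/
/-- If `2^e ∣ N`, `0 < l < 2^e`, and `N ≥ 2l`, then `C(N − 2l, 2^e − l)` is even. -/
theorem choose_sub_even
    (e N l : ℕ) (hN : 2 ^ e ∣ N) (hl : 0 < l) (hl' : l < 2 ^ e) (hNl : 2 * l ≤ N) :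
    2 ∣ (N - 2 * l).choose (2 ^ e - l) := by
  haveI : Fact (Nat.Prime 2) := ⟨Nat.prime_two⟩
  induction e generalizing N l with
  | zero => omega
  | succ e ih =>
    have hlucas := @Choose.choose_modEq_choose_mod_mul_choose_div_nat (N - 2 * l)
      (2 ^ (e + 1) - l) 2 _
    have hlucas' : (N - 2 * l).choose (2 ^ (e + 1) - l) % 2 =
        Nat.choose ((N - 2 * l) % 2) ((2 ^ (e + 1) - l) % 2) *
          Nat.choose ((N - 2 * l) / 2) ((2 ^ (e + 1) - l) / 2) % 2 := hlucas
    rw [Nat.dvd_iff_mod_eq_zero, hlucas']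
    have hNeven : 2 ∣ N := dvd_trans (dvd_pow_self 2 (Nat.succ_ne_zero e)) hN
    have hn2 : (N - 2 * l) % 2 = 0 := by omega
    rcases Nat.even_or_odd l with ⟨l', hl2⟩ | ⟨l', hl2⟩
    · -- l = 2 l' even
      have hk2 : (2 ^ (e + 1) - l) % 2 = 0 := by
        have : (2:ℕ) ^ (e + 1) = 2 * 2 ^ e := by ring
        omega
      have hkd : (2 ^ (e + 1) - l) / 2 = 2 ^ e - l' := by
        have : (2:ℕ) ^ (e + 1) = 2 * 2 ^ e := by ring
        omega
      have hnd : (N - 2 * l) / 2 = N / 2 - 2 * l' := by omega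
      rw [hn2, hk2, hkd, hnd]
      have hdvd' : 2 ^ e ∣ N / 2 := by
        rcases hN with ⟨c, hc⟩
        have hc' : N = 2 * (2 ^ e * c) := by rw [hc]; ring
        exact ⟨c, by omega⟩
      have := ih (N / 2) l' hdvd' (by omega) (by
        have : (2:ℕ) ^ (e + 1) = 2 * 2 ^ e := by ring
        omega) (by omega)
      simp only [Nat.choose_self, one_mul]
      omega
    · -- l odd
      have hk2 : (2 ^ (e + 1) - l) % 2 = 1 := by
        have : (2:ℕ) ^ (e + 1) = 2 * 2 ^ e := by ring
        omega
      rw [hn2, hk2]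
      simp
end

section
/- Let R be a commutative ring in which 2 = 0, let I be an ideal of R, and let (γₙ) be a divided power structure on I. Then for every r ≥ 0 and every x ∈ I, γ_{2^r}(x) equals the r-fold iterate of γ₂ applied to x: γ_{2^r}(x) = γ₂(γ₂(⋯γ₂(x)⋯)) (r applications). (This uses that the coefficient (2^{r+1})!/((2^r)!²·2!) in the composition axiom is odd, hence equals 1 in R.) -/
lemma centralBinom_two_pow_odd (r : ℕ) :
    ((2 ^ (r+1)).choose (2 ^ r)) / 2 % 2 = 1 := by
  set C := (2 ^ (r+1)).choose (2 ^ r) with hC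
  have hkn : 2 ^ r ≤ 2 ^ (r+1) := Nat.pow_le_pow_right (by norm_num) (Nat.le_succ r)
  have hm : emultiplicity 2 C = ((r+1) - multiplicity 2 (2^r) : ℕ) :=
    Nat.Prime.emultiplicity_choose_prime_pow Nat.prime_two hkn (by positivity)
  have hmp : multiplicity 2 (2^r : ℕ) = r :=
    multiplicity_pow_self_of_prime Nat.prime_two.prime r
  rw [hmp, Nat.add_sub_cancel_left] at hm
  have h2 : 2 ∣ C := by
    have := pow_dvd_of_le_emultiplicity (a := 2) (b := C) (k := 1) (le_of_eq hm.symm)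
    simpa using this
  have h4 : ¬ (2^2 ∣ C) :=
    not_pow_dvd_of_emultiplicity_lt (by rw [hm]; exact_mod_cast one_lt_two)
  obtain ⟨q, hq⟩ := h2
  have hqodd : q % 2 = 1 := by
    rcases Nat.mod_two_eq_zero_or_one q with h | h
    · exfalso; apply h4; obtain ⟨t, ht⟩ := Nat.dvd_of_mod_eq_zero h
      exact ⟨t, by omega⟩
    · exact h
  omega

lemma coeff_div_odd (r : ℕ) :
    ((2 ^ r * 2).factorial / ((2 ^ r).factorial ^ 2 * Nat.factorial 2)) % 2 = 1 := by
  have key : (2 ^ r * 2).factorial / ((2 ^ r).factorial ^ 2 * Nat.factorial 2)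
      = ((2 ^ (r+1)).choose (2 ^ r)) / 2 := by
    have h1 : (2 ^ (r+1)) = 2 ^ r * 2 := by ring
    have h2 : (2 ^ r * 2).factorial = ((2 ^ (r+1)).choose (2 ^ r)) * (2 ^ r).factorial ^ 2 := by
      have := Nat.choose_mul_factorial_mul_factorial
        (show 2 ^ r ≤ 2 ^ (r+1) from Nat.pow_le_pow_right (by norm_num) (Nat.le_succ r))
      have hsub : 2 ^ (r+1) - 2 ^ r = 2 ^ r := by rw [h1]; omega
      rw [hsub] at this
      rw [← h1, ← this]; ring
    have aux : ∀ C f : ℕ, 0 < f → C * f / (f * 2) = C / 2 := fun C f hf => by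
      rw [mul_comm C f, Nat.mul_div_mul_left _ _ hf]
    rw [h2, Nat.factorial_two]
    exact aux _ _ (by positivity)
  rw [key]
  exact centralBinom_two_pow_odd r

/-- In a ring where `2 = 0`, the divided power `γ_{2^r}` is the `r`-fold iterate of `γ₂`. -/
theorem dpow_two_pow_eq_iterate
    (R : Type*) [CommRing R] (h2 : (2 : R) = 0) (I : Ideal R)
    (γ : DividedPowerStructure R I) (r : ℕ) :
    ∀ x ∈ I, γ.dpow (2 ^ r) x = (γ.dpow 2)^[r] x := by

  induction r with
  | zero => intro x hx; simpa using γ.dpow_one x hx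
  | succ r ih =>
    intro x hx
    have hcomp := γ.dpow_comp (2 ^ r) 2 (by positivity) x hx
    have hcoeff : (((2 ^ r * 2).factorial / ((2 ^ r).factorial ^ 2 * Nat.factorial 2) : ℕ) : R)
        = 1 := by
      set c := (2 ^ r * 2).factorial / ((2 ^ r).factorial ^ 2 * Nat.factorial 2) with hc
      have := coeff_div_odd r
      have hcb : c = 2 * (c / 2) + 1 := by omega
      rw [hcb]; push_cast [h2]; ring
    rw [hcoeff, one_mul] at hcomp
    have hpow : 2 ^ (r+1) = 2 ^ r * 2 := by ring
    rw [hpow, ← hcomp, ih x hx, Function.iterate_succ_apply']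
end

section
/- Let R be a commutative ring in which 2 = 0, let I be an ideal of R, and let (γₙ) be a divided power structure on I. Let n ≥ 1 have binary expansion n = 2^{i₀} + 2^{i₁} + ⋯ + 2^{i_r} with i₀ < i₁ < ⋯ < i_r. Then for every x ∈ I, γₙ(x) = γ_{2^{i₀}}(x) · γ_{2^{i₁}}(x) ⋯ γ_{2^{i_r}}(x). (This uses that the multinomial coefficient n!/((2^{i₀})!⋯(2^{i_r})!) is odd, hence equals 1 in R.) -/
/-- A divided power structure on an ideal `I` of a commutative ring `R`:
a family of functions `γₙ : I → R` (encoded as `dpow : ℕ → R → R`, constrained on `I`)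
satisfying the five axioms of Berthelot–Ogus. -/
lemma sum_range_two_pow (k : ℕ) : ∑ t ∈ Finset.range k, 2 ^ t = 2 ^ k - 1 := by
  induction k with
  | zero => simp
  | succ k ih => rw [Finset.sum_range_succ, ih]; have := Nat.one_le_two_pow (n := k); omega

lemma choose_two_pow_add_odd (k : ℕ) : ∀ m < 2 ^ k, (2 ^ k + m).choose m % 2 = 1 := by
  induction k with
  | zero => intro m hm; interval_cases m; simp
  | succ k ih =>
    intro m hm
    have hl := @Choose.choose_modEq_choose_mod_mul_choose_div_nat (2 ^ (k+1) + m) m 2 ⟨Nat.prime_two⟩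
    have he : (2 ^ (k+1) + m) % 2 = m % 2 := by
      rw [pow_succ]; omega
    have hd : (2 ^ (k+1) + m) / 2 = 2 ^ k + m / 2 := by
      rw [pow_succ] at *; omega
    have h1 : (m % 2).choose (m % 2) = 1 := Nat.choose_self _
    have h2 : m / 2 < 2 ^ k := by rw [pow_succ] at hm; omega
    have hih := ih (m / 2) h2
    unfold Nat.ModEq at hl
    rw [he, hd, h1, one_mul] at hl
    omega

lemma cast_odd_eq_one {R : Type*} [CommRing R] (h2 : (2 : R) = 0) (c : ℕ) (hc : c % 2 = 1) :
    (c : R) = 1 := by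
  have : c = 2 * (c / 2) + 1 := by omega
  rw [this]
  push_cast
  rw [h2]
  ring

theorem main_aux (R : Type*) [CommRing R] (h2 : (2 : R) = 0) (I : Ideal R)
    (γ : DividedPowerStructure R I) :
    ∀ (r : ℕ) (n : ℕ) (i : Fin (r + 1) → ℕ), StrictMono i →
    n = ∑ j, 2 ^ (i j) → ∀ x ∈ I, γ.dpow n x = ∏ j, γ.dpow (2 ^ (i j)) x := by
  intro r
  induction r with
  | zero =>
    intro n i _ hbin x hx
    rw [Fin.sum_univ_one] at hbin
    rw [hbin, Fin.prod_univ_one]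
  | succ r ih =>
    intro n i hi hbin x hx
    set m := ∑ j : Fin (r + 1), 2 ^ (i j.castSucc) with hm
    have hstep : n = m + 2 ^ (i (Fin.last (r + 1))) := by
      rw [hbin, Fin.sum_univ_castSucc]
    have hmono : StrictMono (fun j : Fin (r + 1) => i j.castSucc) :=
      fun a b h => hi (Fin.castSucc_lt_castSucc_iff.mpr h)
    have hmlt : m < 2 ^ (i (Fin.last (r + 1))) := by
      have hinj : Function.Injective (fun j : Fin (r + 1) => i j.castSucc) := hmono.injective
      have him : m = ∑ t ∈ Finset.image (fun j : Fin (r + 1) => i j.castSucc) Finset.univ, 2 ^ t :=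
        (Finset.sum_image (fun a _ b _ h => hinj h)).symm
      have hsub : Finset.image (fun j : Fin (r + 1) => i j.castSucc) Finset.univ ⊆
          Finset.range (i (Fin.last (r + 1))) := by
        intro t ht
        simp only [Finset.mem_image, Finset.mem_univ, true_and] at ht
        obtain ⟨j, rfl⟩ := ht
        exact Finset.mem_range.mpr (hi (Fin.castSucc_lt_last j))
      calc m ≤ ∑ t ∈ Finset.range (i (Fin.last (r + 1))), 2 ^ t := by
              rw [him]; exact Finset.sum_le_sum_of_subset hsub
        _ = 2 ^ (i (Fin.last (r + 1))) - 1 := sum_range_two_pow _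
        _ < 2 ^ (i (Fin.last (r + 1))) := by
              have := Nat.one_le_two_pow (n := i (Fin.last (r + 1))); omega
    have hchoose : ((m + 2 ^ (i (Fin.last (r + 1)))).choose m : R) = 1 := by
      apply cast_odd_eq_one h2
      have := choose_two_pow_add_odd (i (Fin.last (r + 1))) m hmlt
      rwa [Nat.add_comm] at this
    have hmul := γ.dpow_mul m (2 ^ (i (Fin.last (r + 1)))) x hx
    rw [hchoose, one_mul, ← hstep] at hmul
    rw [← hmul, Fin.prod_univ_castSucc,
      ih m (fun j => i j.castSucc) hmono rfl x hx]


/-- In a ring where `2 = 0`, if `n = 2^{i₀} + ⋯ + 2^{i_r}` is the binary expansion of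
`n ≥ 1` (so `i₀ < i₁ < ⋯ < i_r`), then `γₙ(x) = γ_{2^{i₀}}(x) ⋯ γ_{2^{i_r}}(x)`. -/
theorem dpow_eq_prod_dpow_two_pow_of_binary_expansion
    (R : Type*) [CommRing R] (h2 : (2 : R) = 0) (I : Ideal R)
    (γ : DividedPowerStructure R I)
    (n : ℕ) (hn : 1 ≤ n) (r : ℕ) (i : Fin (r + 1) → ℕ) (hi : StrictMono i)
    (hbin : n = ∑ j, 2 ^ (i j)) :
    ∀ x ∈ I, γ.dpow n x = ∏ j, γ.dpow (2 ^ (i j)) x := by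
  intro x hx
  exact main_aux R h2 I γ r n i hi hbin x hx
end

section
/- Let R be a commutative ring, I an ideal of R, and (γₙ) a divided power structure on I. Let s₁, …, s_m be elements of I such that γ_k(s_i) = 0 for all i and all k ≥ 2. Then for every n ≥ 1, γₙ(s₁ + ⋯ + s_m) equals the n-th elementary symmetric polynomial in s₁, …, s_m: γₙ(Σ_{i=1}^m s_i) = Σ_{1 ≤ i₁ < ⋯ < i_n ≤ m} s_{i₁}·s_{i₂}⋯s_{i_n}. (Applied to sums of Pfister forms, this gives the formula for divided powers on I^r in the Witt ring when −1 is a square.) -/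
/-- If `s₁, …, s_m ∈ I` satisfy `γ_k(sᵢ) = 0` for all `k ≥ 2`, then
`γₙ(s₁ + ⋯ + s_m)` is the `n`-th elementary symmetric polynomial in the `sᵢ`. -/
theorem dpow_sum_eq_esymm
    (R : Type*) [CommRing R] (I : Ideal R)
    (γ : DividedPowerStructure R I)
    (m : ℕ) (s : Fin m → R) (hs : ∀ i, s i ∈ I)
    (hvan : ∀ (i : Fin m), ∀ k : ℕ, 2 ≤ k → γ.dpow k (s i) = 0) :
    ∀ n : ℕ, 1 ≤ n →
      γ.dpow n (∑ i, s i) =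
        ∑ A ∈ Finset.powersetCard n (Finset.univ : Finset (Fin m)), ∏ i ∈ A, s i := by
  have key : ∀ t : Finset (Fin m), ∀ n : ℕ,
      γ.dpow n (∑ i ∈ t, s i) = ∑ A ∈ Finset.powersetCard n t, ∏ i ∈ A, s i := by
    intro t
    induction t using Finset.cons_induction with
    | empty =>
      intro n
      rcases n with _ | k
      · simp [γ.dpow_zero 0 I.zero_mem]
      · have h0 : γ.dpow (k + 1) (0 : R) = 0 := by
          have := γ.dpow_smul (k + 1) 0 0 I.zero_mem
          simpa using this
        have he : Finset.powersetCard (k + 1) (∅ : Finset (Fin m)) = ∅ := by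
          simp
        simp [h0, he]
    | cons a u ha ih =>
      intro n
      have hu : (∑ i ∈ u, s i) ∈ I := Ideal.sum_mem I (fun i _ => hs i)
      rw [Finset.sum_cons, γ.dpow_add n (s a) (hs a) _ hu]
      rcases n with _ | k
      · simp [γ.dpow_zero _ (hs a), γ.dpow_zero _ hu]
      · have hsum : ∑ i ∈ Finset.range (k + 1 + 1),
            γ.dpow i (s a) * γ.dpow (k + 1 - i) (∑ i ∈ u, s i)
            = γ.dpow (k + 1) (∑ i ∈ u, s i) + s a * γ.dpow k (∑ i ∈ u, s i) := by
          rw [Finset.sum_range_succ']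
          have : ∀ i ∈ Finset.range (k + 1),
              γ.dpow (i + 1) (s a) * γ.dpow (k + 1 - (i + 1)) (∑ i ∈ u, s i)
              = if i = 0 then s a * γ.dpow k (∑ i ∈ u, s i) else 0 := by
            intro i _
            rcases i with _ | j
            · simp [γ.dpow_one _ (hs a)]
            · simp [hvan a (j + 2) (by omega)]
          rw [Finset.sum_congr rfl this, Finset.sum_ite_eq' (Finset.range (k + 1)) 0]
          simp [γ.dpow_zero _ (hs a), add_comm]
        rw [hsum, ih (k + 1), ih k, Finset.cons_eq_insert,
          Finset.powersetCard_succ_insert ha k]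
        rw [Finset.sum_union]
        · congr 1
          rw [Finset.sum_image]
          · rw [Finset.mul_sum]
            refine Finset.sum_congr rfl fun A hA => ?_
            have haA : a ∉ A := fun h => ha ((Finset.mem_powersetCard.mp hA).1 h)
            rw [Finset.prod_insert haA]
          · intro A hA B hB hAB
            have haA : a ∉ A := fun h => ha ((Finset.mem_powersetCard.mp hA).1 h)
            have haB : a ∉ B := fun h => ha ((Finset.mem_powersetCard.mp hB).1 h)
            ext x
            constructor <;> intro hx
            · have : x ∈ insert a B := hAB ▸ Finset.mem_insert_of_mem hx
              rcases Finset.mem_insert.mp this with h | h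
              · exact absurd (h ▸ hx) haA
              · exact h
            · have : x ∈ insert a A := hAB ▸ Finset.mem_insert_of_mem hx
              rcases Finset.mem_insert.mp this with h | h
              · exact absurd (h ▸ hx) haB
              · exact h
        · rw [Finset.disjoint_right]
          intro A hA
          rcases Finset.mem_image.mp hA with ⟨B, _, rfl⟩
          intro hA'
          exact ha ((Finset.mem_powersetCard.mp hA').1 (Finset.mem_insert_self a B))
  intro n _
  exact key Finset.univ n
end
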